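/- For natural numbers m, n with m ≥ 1, n ≥ 2, the minimal NFA for L = {a,b}^{≤m} a {a,b}^{n-2} has exactly m+n states: the (m+n)-state NFA of the paper accepts L, and the extended fooling set S = {(b^m a b^j, b^{n-2-j}) : 0 ≤ j ≤ n-2} ∪ {(a^i, b^{m-i} a b^{n-2}) : 0 ≤ i ≤ m} certifies nsc(L) ≥ m+n. -/

import Mathlib

/-- The language `{a,b}^{≤m} a {a,b}^{n-2}` over `Bool` (`true` = a, `false` = b). -/
def Lmn (m n : ℕ) : Language Bool :=
  {w | ∃ u v : List Bool, w = u ++ [true] ++ v ∧ u.length ≤ m ∧ v.length = n - 2}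

/-- The `(m+n)`-state NFA of Figure 1 for `Lmn m n`: states `0, …, m` form a chain
on both letters (counting a prefix of length at most `m`), each of them moves to
state `m+1` on `a`, and states `m+1, …, m+n-1` form a chain on both letters;
the unique final state is `m+n-1`. -/
def nfaFig1 (m n : ℕ) : NFA Bool (Fin (m + n)) where
  step := fun i c => {j | ((i : ℕ) < m ∧ (j : ℕ) = (i : ℕ) + 1) ∨
    ((i : ℕ) ≤ m ∧ (j : ℕ) = m + 1 ∧ c = true) ∨
    (m + 1 ≤ (i : ℕ) ∧ (i : ℕ) < m + n - 1 ∧ (j : ℕ) = (i : ℕ) + 1)}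
  start := {j | (j : ℕ) = 0}
  accept := {j | (j : ℕ) = m + n - 1}

/-- Left components of the extended fooling set:
`b^m a b^j` for `0 ≤ j ≤ n-2`, and `a^i` for `0 ≤ i ≤ m`. -/
def xT (m n : ℕ) (i : Fin (m + n)) : List Bool :=
  if (i : ℕ) ≤ n - 2 then
    List.replicate m false ++ [true] ++ List.replicate (i : ℕ) false
  else List.replicate ((i : ℕ) - (n - 1)) true

/-- Right components of the extended fooling set:
`b^{n-2-j}` for `0 ≤ j ≤ n-2`, and `b^{m-i} a b^{n-2}` for `0 ≤ i ≤ m`. -/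
def yT (m n : ℕ) (i : Fin (m + n)) : List Bool :=
  if (i : ℕ) ≤ n - 2 then List.replicate (n - 2 - (i : ℕ)) false
  else List.replicate (m - ((i : ℕ) - (n - 1))) false ++ [true] ++
    List.replicate (n - 2) false

/-- Characterization of membership in `Lmn`. -/
lemma mem_Lmn_iff {m n : ℕ} (hn : 2 ≤ n) {w : List Bool} :
    w ∈ Lmn m n ↔ ∃ k, k ≤ m ∧ w.length = k + (n - 1) ∧ w[k]? = some true := by
  constructor
  · rintro ⟨u, v, rfl, hu, hv⟩
    refine ⟨u.length, hu, ?_, ?_⟩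
    · simp [hv]; omega
    · rw [List.append_assoc, List.getElem?_append_right le_rfl]
      simp
  · rintro ⟨k, hk, hlen, hget⟩
    rw [List.getElem?_eq_some_iff] at hget
    obtain ⟨hkl, hget⟩ := hget
    refine ⟨w.take k, w.drop (k + 1), ?_, by simp; omega, by simp; omega⟩
    conv_lhs => rw [← List.take_append_drop k w, ← List.getElem_cons_drop (h := hkl)]
    simp [hget]

lemma length_le_of_mem_Lmn {m n : ℕ} (hn : 2 ≤ n) {w : List Bool}
    (h : w ∈ Lmn m n) : w.length ≤ m + n - 1 := by
  obtain ⟨u, v, rfl, hu, hv⟩ := h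
  simp [hv]; omega

lemma notmem_of_long {m n : ℕ} (hn : 2 ≤ n) {w : List Bool}
    (hw : m + n - 1 < w.length) : w ∉ Lmn m n :=
  fun h => absurd (length_le_of_mem_Lmn hn h) (by omega)

/-- The invariant predicate for the NFA of Figure 1. -/
def Pinv (m n : ℕ) (w : List Bool) (q : ℕ) : Prop :=
  (q = w.length ∧ w.length ≤ m) ∨
  (∃ k, k < w.length ∧ k ≤ m ∧ w[k]? = some true ∧
    q = m + (w.length - k) ∧ w.length - k ≤ n - 1)

lemma nfaFig1_eval (m n : ℕ) (hn : 2 ≤ n) (w : List Bool) (q : Fin (m + n)) :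
    q ∈ (nfaFig1 m n).eval w ↔ Pinv m n w (q : ℕ) := by
  induction w using List.reverseRecOn generalizing q with
  | nil =>
    simp only [NFA.eval_nil, nfaFig1, Pinv, List.length_nil, Set.mem_setOf_eq]
    constructor
    · intro h; exact Or.inl ⟨h, Nat.zero_le m⟩
    · rintro (⟨h, -⟩ | ⟨k, hk, -⟩)
      · exact h
      · omega
  | append_singleton w c ih =>
    rw [NFA.eval_append_singleton, NFA.mem_stepSet]
    constructor
    · rintro ⟨s, hs, hstep⟩
      rw [ih] at hs
      simp only [nfaFig1, Set.mem_setOf_eq] at hstep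
      rcases hs with ⟨hsW, hWm⟩ | ⟨k, hkW, hkm, hget, hsq, hbd⟩
      · rcases hstep with ⟨h1, h2⟩ | ⟨h1, h2, h3⟩ | ⟨h1, h2, h3⟩
        · exact Or.inl (by simp; omega)
        · refine Or.inr ⟨w.length, by simp, by omega, ?_, by simp; omega, by simp; omega⟩
          rw [List.getElem?_concat_length, h3]
        · omega
      · rcases hstep with ⟨h1, h2⟩ | ⟨h1, h2, h3⟩ | ⟨h1, h2, h3⟩
        · omega
        · omega
        · refine Or.inr ⟨k, by simp; omega, hkm, ?_, by simp; omega, by simp; omega⟩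
          rwa [List.getElem?_append_left hkW]
    · rintro (⟨hq, hle⟩ | ⟨k, hk1, hk2, hget, hq, hbd⟩)
      · simp only [List.length_append, List.length_singleton] at hq hle
        refine ⟨⟨w.length, by omega⟩, ?_, ?_⟩
        · rw [ih]; exact Or.inl ⟨rfl, by omega⟩
        · simp only [nfaFig1, Set.mem_setOf_eq]
          exact Or.inl ⟨by omega, by omega⟩
      · simp only [List.length_append, List.length_singleton] at hk1 hq hbd
        rcases Nat.lt_succ_iff_lt_or_eq.mp hk1 with hkW | hkW
        · refine ⟨⟨m + (w.length - k), by omega⟩, ?_, ?_⟩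
          · rw [ih]
            refine Or.inr ⟨k, hkW, hk2, ?_, by simp, by omega⟩
            rwa [List.getElem?_append_left hkW] at hget
          · simp only [nfaFig1, Set.mem_setOf_eq]
            exact Or.inr (Or.inr ⟨by omega, by omega, by omega⟩)
        · subst hkW
          rw [List.getElem?_concat_length] at hget
          refine ⟨⟨w.length, by omega⟩, ?_, ?_⟩
          · rw [ih]; exact Or.inl ⟨rfl, by omega⟩
          · simp only [nfaFig1, Set.mem_setOf_eq]
            refine Or.inr (Or.inl ⟨by omega, by omega, by
              simpa using hget.symm⟩)

lemma nfaFig1_accepts (m n : ℕ) (hn : 2 ≤ n) :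
    (nfaFig1 m n).accepts = Lmn m n := by
  ext w
  rw [NFA.mem_accepts, mem_Lmn_iff hn]
  constructor
  · rintro ⟨q, hq, hmem⟩
    rw [← NFA.eval, nfaFig1_eval m n hn] at hmem
    simp only [nfaFig1, Set.mem_setOf_eq] at hq
    rcases hmem with ⟨h1, h2⟩ | ⟨k, hk1, hk2, hget, hq', hbd⟩
    · omega
    · exact ⟨k, hk2, by omega, hget⟩
  · rintro ⟨k, hk, hlen, hget⟩
    refine ⟨⟨m + n - 1, by omega⟩, by simp [nfaFig1], ?_⟩
    rw [← NFA.eval, nfaFig1_eval m n hn]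
    exact Or.inr ⟨k, by omega, hk, hget, by simp; omega, by omega⟩

lemma part2_mem (m n : ℕ) (hn : 2 ≤ n) (i : Fin (m + n)) :
    xT m n i ++ yT m n i ∈ Lmn m n := by
  have hi := i.isLt
  by_cases h : (i : ℕ) ≤ n - 2
  · rw [xT, yT, if_pos h, if_pos h]
    exact ⟨List.replicate m false,
      List.replicate (i : ℕ) false ++ List.replicate (n - 2 - (i : ℕ)) false,
      by simp [List.append_assoc], by simp, by simp; omega⟩
  · rw [xT, yT, if_neg h, if_neg h]
    exact ⟨List.replicate ((i : ℕ) - (n - 1)) true ++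
        List.replicate (m - ((i : ℕ) - (n - 1))) false,
      List.replicate (n - 2) false,
      by simp [List.append_assoc], by simp; omega, by simp⟩

/-- Two `j`-type elements cross: never in the language. -/
lemma notmem_JJ {m n : ℕ} (hn : 2 ≤ n) {i j : ℕ} (hij : i ≠ j)
    (hi : i ≤ n - 2) (hj : j ≤ n - 2) :
    (List.replicate m false ++ [true] ++ List.replicate i false) ++
      List.replicate (n - 2 - j) false ∉ Lmn m n := by
  intro h
  rw [mem_Lmn_iff hn] at h
  obtain ⟨k, hk, hlen, hget⟩ := h
  simp only [List.length_append, List.length_replicate, List.length_singleton] at hlen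
  rcases Nat.lt_or_ge i j with h1 | h1
  · -- i < j : the position k is strictly below m, where the letter is b
    have hkm : k < m := by omega
    rw [List.append_assoc, List.append_assoc,
      List.getElem?_append_left (by simpa using hkm)] at hget
    rw [List.getElem?_replicate, if_pos hkm] at hget
    simp at hget
  · -- i > j : too long
    omega


lemma part3_fool (m n : ℕ) (hn : 2 ≤ n) (i j : Fin (m + n)) (hij : i ≠ j) :
    xT m n i ++ yT m n j ∉ Lmn m n ∨ xT m n j ++ yT m n i ∉ Lmn m n := by
  have hi := i.isLt
  have hj := j.isLt
  have hvij : (i : ℕ) ≠ (j : ℕ) := fun h => hij (Fin.ext h)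
  by_cases h1 : (i : ℕ) ≤ n - 2 <;> by_cases h2 : (j : ℕ) ≤ n - 2
  · left
    simp only [xT, yT, if_pos h1, if_pos h2]
    exact notmem_JJ hn hvij h1 h2
  · left
    simp only [xT, yT, if_pos h1, if_neg h2]
    apply notmem_of_long hn
    simp; omega
  · right
    simp only [xT, yT, if_pos h2, if_neg h1]
    apply notmem_of_long hn
    simp; omega
  · rcases Nat.lt_or_ge ((i : ℕ) - (n - 1)) ((j : ℕ) - (n - 1)) with h3 | h3
    · right
      simp only [xT, yT, if_neg h1, if_neg h2]
      apply notmem_of_long hn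
      simp; omega
    · have h4 : (j : ℕ) - (n - 1) < (i : ℕ) - (n - 1) := by omega
      left
      simp only [xT, yT, if_neg h1, if_neg h2]
      apply notmem_of_long hn
      simp; omega

lemma nfa_evalFrom_append {α σ : Type*} (B : NFA α σ) (S : Set σ) (x y : List α) :
    B.evalFrom S (x ++ y) = B.evalFrom (B.evalFrom S x) y := by
  simp [NFA.evalFrom, List.foldl_append]

lemma nfa_mem_evalFrom_iff {α σ : Type*} (B : NFA α σ) (y : List α) (S : Set σ) (f : σ) :
    f ∈ B.evalFrom S y ↔ ∃ q ∈ S, f ∈ B.evalFrom ({q} : Set σ) y := by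
  induction y generalizing S with
  | nil => simp [NFA.evalFrom]
  | cons c y ih =>
    have h1 : ∀ T : Set σ, B.evalFrom T (c :: y) = B.evalFrom (B.stepSet T c) y :=
      fun T => rfl
    rw [h1, ih]
    constructor
    · rintro ⟨p, hp, hf⟩
      rw [NFA.mem_stepSet] at hp
      obtain ⟨q, hq, hpq⟩ := hp
      refine ⟨q, hq, ?_⟩
      rw [h1, ih]
      exact ⟨p, by rw [NFA.mem_stepSet]; exact ⟨q, rfl, hpq⟩, hf⟩
    · rintro ⟨q, hq, hf⟩
      rw [h1, ih] at hf
      obtain ⟨p, hp, hf⟩ := hf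
      rw [NFA.mem_stepSet] at hp
      obtain ⟨q', hq', hpq⟩ := hp
      have hqq : q' = q := hq'
      subst hqq
      refine ⟨p, ?_, hf⟩
      rw [NFA.mem_stepSet]
      exact ⟨q', hq, hpq⟩

theorem minimal_nfa_Lmn (m n : ℕ) (hm : 1 ≤ m) (hn : 2 ≤ n) :
    (nfaFig1 m n).accepts = Lmn m n ∧
    (∀ i : Fin (m + n), xT m n i ++ yT m n i ∈ Lmn m n) ∧
    (∀ i j : Fin (m + n), i ≠ j →
      xT m n i ++ yT m n j ∉ Lmn m n ∨ xT m n j ++ yT m n i ∉ Lmn m n) ∧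
    (∀ (σ : Type) [Fintype σ] (B : NFA Bool σ),
      B.accepts = Lmn m n → m + n ≤ Fintype.card σ) := by
  refine ⟨nfaFig1_accepts m n hn, part2_mem m n hn, part3_fool m n hn, ?_⟩
  intro σ _ B hB
  have key : ∀ i : Fin (m + n), ∃ q : σ, q ∈ B.evalFrom B.start (xT m n i) ∧
      ∃ f ∈ B.accept, f ∈ B.evalFrom ({q} : Set σ) (yT m n i) := by
    intro i
    have hmem : xT m n i ++ yT m n i ∈ B.accepts := by
      rw [hB]; exact part2_mem m n hn i
    rw [NFA.mem_accepts] at hmem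
    obtain ⟨f, hf, hfe⟩ := hmem
    rw [nfa_evalFrom_append, nfa_mem_evalFrom_iff] at hfe
    obtain ⟨q, hq, hfq⟩ := hfe
    exact ⟨q, hq, f, hf, hfq⟩
  choose g hg1 hg2 using key
  have hcross : ∀ i j : Fin (m + n), g i = g j → xT m n i ++ yT m n j ∈ Lmn m n := by
    intro i j hgij
    rw [← hB, NFA.mem_accepts]
    obtain ⟨f, hf, hf2⟩ := hg2 j
    refine ⟨f, hf, ?_⟩
    rw [nfa_evalFrom_append, nfa_mem_evalFrom_iff]
    exact ⟨g i, hg1 i, by rw [hgij]; exact hf2⟩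
  have hinj : Function.Injective g := by
    intro i j hgij
    by_contra hij
    rcases part3_fool m n hn i j hij with h | h
    · exact h (hcross i j hgij)
    · exact h (hcross j i hgij.symm)
  calc m + n = Fintype.card (Fin (m + n)) := (Fintype.card_fin _).symm
    _ ≤ Fintype.card σ := Fintype.card_le_of_injective g hinj
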